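/- Let Γ_m < Γ_{m+1} < ⋯ < Γ_n be consecutive skeleton points. Then the longest path length is additive over skeleton points: L[Γ_m, Γ_n] = L[Γ_m, Γ_{m+1}] + ⋯ + L[Γ_{n−1}, Γ_n]. -/

import Mathlib

open MeasureTheory ProbabilityTheory Filter

/-- Configuration: edge indicators. -/
abbrev Cfg := ℤ → ℤ → Bool

/-- There is an edge from `i` to `j`. -/
def Edge (ω : Cfg) (i j : ℤ) : Prop := i < j ∧ ω i j = true

/-- There is a directed path from `i` to `j`. -/
def Leads (ω : Cfg) : ℤ → ℤ → Prop := Relation.TransGen (Edge ω)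

/-- A list of vertices forming a path inside `{a,...,b}`. -/
def IsPathIn (ω : Cfg) (a b : ℤ) (l : List ℤ) : Prop :=
  l ≠ [] ∧ l.Chain' (Edge ω) ∧ ∀ x ∈ l, a ≤ x ∧ x ≤ b

/-- `L ω a b`: maximal number of edges of a path contained in `{a,...,b}`. -/
noncomputable def L (ω : Cfg) (a b : ℤ) : ℕ :=
  sSup {n | ∃ l : List ℤ, IsPathIn ω a b l ∧ l.length = n + 1}

/-- `T ω i j`: maximal number of edges of a path from `i` to `j` (0 if none). -/
noncomputable def T (ω : Cfg) (i j : ℤ) : ℕ :=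
  sSup {n | ∃ l : List ℤ, l.Chain' (Edge ω) ∧ l.head? = some i ∧
    l.getLast? = some j ∧ l.length = n + 1}

/-- The skeleton of the graph. -/
def Skel (ω : Cfg) : Set ℤ :=
  {n | (∀ j, n < j → Leads ω n j) ∧ (∀ j, j < n → Leads ω j n)}

/-- The model hypotheses: independent edges, edge `(i,j)` present w.p. `p (j-i)`. -/
def GraphModel (p : ℕ → ℝ) (μ : Measure Cfg) : Prop :=
  IsProbabilityMeasure μ ∧
  iIndepFun (β := fun _ : ℤ × ℤ => Bool)
    (fun e (ω : Cfg) => ω e.1 e.2) μ ∧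
  (∀ i j : ℤ, i < j → μ {ω | ω i j = true} = ENNReal.ofReal (p (j - i).toNat)) ∧
  (∀ i j : ℤ, j ≤ i → μ {ω | ω i j = true} = 0)

/- ### Auxiliary lemmas -/

lemma chain'_pairwise {ω : Cfg} {l : List ℤ} (h : l.Chain' (Edge ω)) :
    l.Pairwise (· < ·) :=
  List.isChain_iff_pairwise.mp (List.IsChain.imp (fun _ _ h => h.1) h)

lemma head_le_mem {ω : Cfg} {l : List ℤ} (h : l.Chain' (Edge ω)) {i x : ℤ}
    (hh : l.head? = some i) (hx : x ∈ l) : i ≤ x := by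
  cases l with
  | nil => simp at hx
  | cons a t =>
    simp at hh; subst hh
    rcases List.mem_cons.mp hx with rfl | hx
    · exact le_refl x
    · exact le_of_lt (List.rel_of_pairwise_cons (chain'_pairwise h) hx)

lemma mem_le_getLast {ω : Cfg} {l : List ℤ} (h : l.Chain' (Edge ω)) {j x : ℤ}
    (hg : l.getLast? = some j) (hx : x ∈ l) : x ≤ j := by
  have hp : l.reverse.Pairwise (· > ·) := by
    rw [List.pairwise_reverse]; exact chain'_pairwise h
  rw [List.getLast?_eq_head?_reverse] at hg
  have hx' : x ∈ l.reverse := List.mem_reverse.mpr hx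
  cases hr : l.reverse with
  | nil => rw [hr] at hx'; simp at hx'
  | cons a t =>
    rw [hr] at hg hx' hp
    simp at hg; subst hg
    rcases List.mem_cons.mp hx' with rfl | hx'
    · exact le_refl x
    · exact le_of_lt (List.rel_of_pairwise_cons hp hx')

lemma length_le_of_path {ω : Cfg} {a b : ℤ} {l : List ℤ} (h : IsPathIn ω a b l) :
    l.length ≤ (b - a).toNat + 1 := by
  obtain ⟨hne, hch, hmem⟩ := h
  have hnd : l.Nodup := (chain'_pairwise hch).imp fun h => ne_of_lt h
  have hsub : l.toFinset ⊆ Finset.Icc a b := by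
    intro x hx
    exact Finset.mem_Icc.mpr (hmem x (List.mem_toFinset.mp hx))
  have hc := Finset.card_le_card hsub
  rw [List.toFinset_card_of_nodup hnd, Int.card_Icc] at hc
  omega

lemma L_bdd (ω : Cfg) (a b : ℤ) :
    BddAbove {n | ∃ l : List ℤ, IsPathIn ω a b l ∧ l.length = n + 1} := by
  refine ⟨(b - a).toNat, fun n hn => ?_⟩
  obtain ⟨l, hl, hlen⟩ := hn
  have := length_le_of_path hl
  omega

lemma L_le {ω : Cfg} {a b : ℤ} {l : List ℤ} (h : IsPathIn ω a b l) :
    l.length - 1 ≤ L ω a b := by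
  have hpos : 0 < l.length := List.length_pos_iff.mpr h.1
  exact le_csSup (L_bdd ω a b) ⟨l, h, by omega⟩

lemma L_attained {ω : Cfg} {a b : ℤ} (hab : a ≤ b) :
    ∃ l, IsPathIn ω a b l ∧ l.length = L ω a b + 1 := by
  have hne : {n | ∃ l : List ℤ, IsPathIn ω a b l ∧ l.length = n + 1}.Nonempty :=
    ⟨0, [a], ⟨by simp, List.isChain_singleton a, by simp [hab]⟩, rfl⟩
  exact Nat.sSup_mem hne (L_bdd ω a b)

lemma path_concat {ω : Cfg} {l1 l2 : List ℤ} {k : ℤ}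
    (h1 : l1.Chain' (Edge ω)) (h2 : l2.Chain' (Edge ω))
    (hg : l1.getLast? = some k) (hh : l2.head? = some k) :
    (l1 ++ l2.tail).Chain' (Edge ω) ∧
    (l1 ++ l2.tail).head? = l1.head? ∧
    (l1 ++ l2.tail).getLast? = l2.getLast? ∧
    (l1 ++ l2.tail).length + 1 = l1.length + l2.length := by
  have hne1 : l1 ≠ [] := by rintro rfl; simp at hg
  obtain ⟨t, rfl⟩ : ∃ t, l2 = k :: t := by
    cases l2 with
    | nil => simp at hh
    | cons a t => simp at hh; exact ⟨t, by rw [hh]⟩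
  unfold List.Chain' at h1 h2 ⊢
  rw [List.isChain_cons] at h2
  refine ⟨?_, ?_, ?_, ?_⟩
  · rw [List.isChain_append]
    refine ⟨h1, h2.2, fun x hx y hy => ?_⟩
    rw [hg] at hx; simp at hx; subst hx
    exact h2.1 y hy
  · cases l1 with
    | nil => exact absurd rfl hne1
    | cons a s => simp
  · show (l1 ++ t).getLast? = (k :: t).getLast?
    cases t with
    | nil => simpa using hg
    | cons b u =>
      rw [List.getLast?_append]
      rw [List.getLast?_eq_getLast (l := b::u) (by simp), Option.some_or]
      simp [List.getLast?_eq_getLast]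
  · simp; omega

lemma leads_path {ω : Cfg} {i j : ℤ} (h : Leads ω i j) :
    ∃ l : List ℤ, l.Chain' (Edge ω) ∧ l.head? = some i ∧ l.getLast? = some j ∧
      2 ≤ l.length := by
  induction h with
  | single e => exact ⟨[i, _], by unfold List.Chain'; simp [List.isChain_cons_cons]; exact e, rfl, rfl, by simp⟩
  | @tail b c hab e ih =>
    obtain ⟨l, hc, hh, hg, hl⟩ := ih
    refine ⟨l ++ [c], ?_, ?_, List.getLast?_concat, by simp; omega⟩
    · unfold List.Chain'; rw [List.isChain_append]
      refine ⟨hc, by simp, fun x hx y hy => ?_⟩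
      rw [hg] at hx; simp at hx hy; subst hx hy; exact e
    · cases l with
      | nil => simp at hh
      | cons a s => simp at hh ⊢; exact hh

lemma extend_right {ω : Cfg} {a m : ℤ} (hm : ∀ j, j < m → Leads ω j m) {l : List ℤ}
    (h : IsPathIn ω a m l) :
    ∃ l', IsPathIn ω a m l' ∧ l'.getLast? = some m ∧ l.length ≤ l'.length := by
  obtain ⟨hne, hch, hmem⟩ := h
  have hx : l.getLast? = some (l.getLast hne) := List.getLast?_eq_getLast hne
  set x := l.getLast hne with hxdef
  have hxl : x ∈ l := List.getLast_mem hne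
  have hxm : x ≤ m := (hmem x hxl).2
  rcases eq_or_lt_of_le hxm with rfl | hlt
  · exact ⟨l, ⟨hne, hch, hmem⟩, hx, le_refl _⟩
  · obtain ⟨p, pc, ph, pg, pl⟩ := leads_path (hm x hlt)
    obtain ⟨cc, chd, cgl, clen⟩ := path_concat hch pc hx ph
    refine ⟨l ++ p.tail, ⟨by simp [hne], cc, ?_⟩, by rw [cgl, pg], by omega⟩
    intro z hz
    rcases List.mem_append.mp hz with hz | hz
    · exact hmem z hz
    · have hzp : z ∈ p := List.mem_of_mem_tail hz
      exact ⟨le_trans (hmem x hxl).1 (head_le_mem pc ph hzp),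
        mem_le_getLast pc pg hzp⟩

lemma extend_left {ω : Cfg} {m b : ℤ} (hm : ∀ j, m < j → Leads ω m j) {l : List ℤ}
    (h : IsPathIn ω m b l) :
    ∃ l', IsPathIn ω m b l' ∧ l'.head? = some m ∧ l.length ≤ l'.length := by
  obtain ⟨hne, hch, hmem⟩ := h
  have hx : l.head? = some (l.head hne) := List.head?_eq_head hne
  set x := l.head hne with hxdef
  have hxl : x ∈ l := List.head_mem hne
  have hxm : m ≤ x := (hmem x hxl).1
  rcases eq_or_lt_of_le hxm with rfl | hlt
  · exact ⟨l, ⟨hne, hch, hmem⟩, hx.symm ▸ hx, le_refl _⟩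
  · obtain ⟨p, pc, ph, pg, pl⟩ := leads_path (hm x hlt)
    obtain ⟨cc, chd, cgl, clen⟩ := path_concat pc hch pg hx
    have hpne : p ≠ [] := by rintro rfl; simp at ph
    refine ⟨p ++ l.tail, ⟨by simp [hpne], cc, ?_⟩, by rw [chd, ph], by omega⟩
    intro z hz
    rcases List.mem_append.mp hz with hz | hz
    · exact ⟨head_le_mem pc ph hz,
        le_trans (mem_le_getLast pc pg hz) (hmem x hxl).2⟩
    · exact hmem z (List.mem_of_mem_tail hz)

lemma exists_straddle {ω : Cfg} : ∀ {l : List ℤ}, l.Chain' (Edge ω) → ∀ {m x y : ℤ},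
    x ∈ l → y ∈ l → y < m → m < x → m ∉ l →
    ∃ s i j t, l = s ++ i :: j :: t ∧ i < m ∧ m < j := by
  intro l
  induction l with
  | nil => intro _ m x y hx; simp at hx
  | cons a r ih =>
    intro h m x y hx hy hym hmx hm
    have har : ∀ z ∈ r, a < z := fun z hz =>
      List.rel_of_pairwise_cons (chain'_pairwise h) hz
    have ham : a < m := by
      rcases List.mem_cons.mp hy with rfl | hy
      · exact hym
      · exact lt_trans (har y hy) hym
    have hxr : x ∈ r := by
      rcases List.mem_cons.mp hx with rfl | hx
      · omega
      · exact hx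
    cases r with
    | nil => simp at hxr
    | cons b r' =>
      rcases lt_trichotomy b m with hbm | rfl | hmb
      · obtain ⟨s, i, j, t, heq, h1, h2⟩ := ih h.tail hxr
          (List.mem_cons_self (a := b) (l := r')) hbm hmx
          (fun hc => hm (List.mem_cons_of_mem a hc))
        exact ⟨a :: s, i, j, t, by rw [heq]; rfl, h1, h2⟩
      · exact absurd (List.mem_cons_of_mem a (List.mem_cons_self (a := b) (l := r'))) hm
      · exact ⟨[], a, b, r', rfl, ham, hmb⟩

lemma L_split {ω : Cfg} {a m b : ℤ} (hm : m ∈ Skel ω) (ham : a ≤ m) (hmb : m ≤ b) :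
    L ω a b = L ω a m + L ω m b := by
  obtain ⟨hfwd, hbwd⟩ := hm
  apply le_antisymm
  · obtain ⟨l, hl, hlen⟩ := L_attained (ham.trans hmb)
    by_cases hmem : m ∈ l
    · obtain ⟨s, t, rfl⟩ := List.append_of_mem hmem
      obtain ⟨ps, pmt, hcross⟩ := List.pairwise_append.mp (chain'_pairwise hl.2.1)
      obtain ⟨cs, cmt, hedge⟩ := List.isChain_append.mp hl.2.1
      have h1 : IsPathIn ω a m (s ++ [m]) := by
        refine ⟨by simp, ?_, ?_⟩
        · unfold List.Chain'; rw [List.isChain_append]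
          refine ⟨cs, by simp, fun x hx y hy => ?_⟩
          simp at hy; subst hy
          exact hedge x hx m (by simp)
        · intro x hx
          rcases List.mem_append.mp hx with hx | hx
          · exact ⟨(hl.2.2 x (by simp [hx])).1,
              le_of_lt (hcross x hx m (by simp))⟩
          · simp at hx; subst hx; exact ⟨ham, le_refl _⟩
      have h2 : IsPathIn ω m b (m :: t) := by
        refine ⟨by simp, cmt, ?_⟩
        intro x hx
        rcases List.mem_cons.mp hx with rfl | hx
        · exact ⟨le_refl x, hmb⟩
        · exact ⟨le_of_lt (List.rel_of_pairwise_cons pmt hx),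
            (hl.2.2 x (by simp [hx])).2⟩
      have e1 := L_le h1
      have e2 := L_le h2
      simp at e1 e2
      simp at hlen
      omega
    · by_cases hall1 : ∀ x ∈ l, x ≤ m
      · have hP : IsPathIn ω a m l :=
          ⟨hl.1, hl.2.1, fun x hx => ⟨(hl.2.2 x hx).1, hall1 x hx⟩⟩
        have := L_le hP
        omega
      · by_cases hall2 : ∀ x ∈ l, m ≤ x
        · have hP : IsPathIn ω m b l :=
            ⟨hl.1, hl.2.1, fun x hx => ⟨hall2 x hx, (hl.2.2 x hx).2⟩⟩
          have := L_le hP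
          omega
        · exfalso
          push_neg at hall1 hall2
          obtain ⟨xbig, hxbigl, hxbig⟩ := hall1
          obtain ⟨ysm, hysml, hysm⟩ := hall2
          obtain ⟨s0, i, j, t0, heq, him, hmj⟩ :=
            exists_straddle hl.2.1 hxbigl hysml hysm hxbig hmem
          have hst : (s0 ++ [i]) ++ (j :: t0) = l := by simp [heq]
          have hi : (s0 ++ [i]).getLast? = some i := List.getLast?_concat
          have hj : (j :: t0).head? = some j := rfl
          have hil : i ∈ l := by rw [heq]; simp
          have hjl : j ∈ l := by rw [heq]; simp
          have hchst : ((s0 ++ [i]) ++ (j :: t0)).Chain' (Edge ω) := by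
            rw [hst]; exact hl.2.1
          obtain ⟨cs, ct, _⟩ := List.isChain_append.mp hchst
          obtain ⟨p, pc, ph, pg, plen⟩ := leads_path (hbwd i him)
          obtain ⟨q, qc, qh, qg, qlen⟩ := leads_path (hfwd j hmj)
          obtain ⟨mc, mhd, mgl, mlen⟩ := path_concat pc qc pg qh
          have hmidh : (p ++ q.tail).head? = some i := by rw [mhd, ph]
          have hmidg : (p ++ q.tail).getLast? = some j := by rw [mgl, qg]
          obtain ⟨Xc, Xh, Xg, Xlen⟩ := path_concat cs mc hi hmidh
          have hXg : ((s0 ++ [i]) ++ (p ++ q.tail).tail).getLast? = some j := by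
            rw [Xg, hmidg]
          obtain ⟨Yc, Yh, Yg, Ylen⟩ := path_concat Xc ct hXg hj
          have hYpath : IsPathIn ω a b
              (((s0 ++ [i]) ++ (p ++ q.tail).tail) ++ (j :: t0).tail) := by
            refine ⟨by simp, Yc, ?_⟩
            intro z hz
            rcases List.mem_append.mp hz with hz | hz
            · rcases List.mem_append.mp hz with hz | hz
              · have : z ∈ l := by
                  rw [← hst]; exact List.mem_append_left _ hz
                exact hl.2.2 z this
              · have hzm : z ∈ p ++ q.tail := List.mem_of_mem_tail hz
                have h1 : i ≤ z := head_le_mem mc hmidh hzm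
                have h2 : z ≤ j := mem_le_getLast mc hmidg hzm
                exact ⟨le_trans (hl.2.2 i hil).1 h1, le_trans h2 (hl.2.2 j hjl).2⟩
            · have : z ∈ l := by
                rw [← hst]
                exact List.mem_append_right _ (List.mem_of_mem_tail hz)
              exact hl.2.2 z this
          have hle := L_le hYpath
          have hll : ((s0 ++ [i]) ++ (j :: t0)).length = l.length := by rw [hst]
          simp only [List.length_append, List.length_cons, List.length_tail,
            List.length_nil] at hle hll Xlen Ylen mlen
          omega
  · obtain ⟨l1, hl1, hlen1⟩ := L_attained (ω := ω) ham
    obtain ⟨l2, hl2, hlen2⟩ := L_attained (ω := ω) hmb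
    obtain ⟨l1', h1', hg1', hlen1'⟩ := extend_right hbwd hl1
    obtain ⟨l2', h2', hh2', hlen2'⟩ := extend_left hfwd hl2
    obtain ⟨Yc, Yh, Yg, Ylen⟩ := path_concat h1'.2.1 h2'.2.1 hg1' hh2'
    have hYpath : IsPathIn ω a b (l1' ++ l2'.tail) := by
      refine ⟨by simp [h1'.1], Yc, ?_⟩
      intro z hz
      rcases List.mem_append.mp hz with hz | hz
      · exact ⟨(h1'.2.2 z hz).1, le_trans (h1'.2.2 z hz).2 hmb⟩
      · have := h2'.2.2 z (List.mem_of_mem_tail hz)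
        exact ⟨le_trans ham this.1, this.2⟩
    have := L_le hYpath
    omega

/-- additivity of the longest path length over consecutive
skeleton points. -/
theorem stmt_6 (ω : Cfg) (n : ℕ) (hn : 0 < n) (Γ : ℕ → ℤ)
    (hmono : StrictMono Γ)
    (hskel : ∀ k ≤ n, Γ k ∈ Skel ω)
    (hconsec : ∀ k < n, ∀ s ∈ Skel ω, Γ k < s → s < Γ (k + 1) → False) :
    L ω (Γ 0) (Γ n) = ∑ k ∈ Finset.range n, L ω (Γ k) (Γ (k + 1)) := by
  clear hconsec hn
  induction n with
  | zero =>
    have h := L_split (hskel 0 (le_refl 0)) (le_refl (Γ 0)) (le_refl (Γ 0))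
    simpa using by omega
  | succ n ih =>
    rcases Nat.eq_zero_or_pos n with rfl | hn'
    · simp
    · rw [Finset.sum_range_succ, ← ih (fun k hk => hskel k (by omega))]
      exact L_split (hskel n (by omega)) (hmono.monotone (Nat.zero_le n))
        (le_of_lt (hmono (Nat.lt_succ_self n)))
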